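/- (Revelation principle for mediated Bayes-Nash equilibrium) If an allocation choice function f is implementable in F-Bayes-Nash equilibrium by a mediated mechanism M = ((Φ_i), D, (Ψ_i), h) with equilibrium strategy profile τ, then f is truthfully implementable in F-Bayes-Nash equilibrium by the direct mediated mechanism M^d with message sets Φ_i' = Φ_i × (Ψ_i)^{Θ_i}, mediator distribution D'(φ, (ψ_i^{θ_i'})) = D(φ) Π_i Π_{θ_i'} τ_i(ψ_i^{θ_i'}|φ_i, θ_i'), and allocation function h^d(φ', θ') = h(φ, (ψ_i^{θ_i'})_i). -/
import Mathlib


open Finset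

section Helpers
variable {κ : Type} [Fintype κ] [DecidableEq κ]

lemma RP.ite_sum_zero {β : Type*} {c : Prop} [Decidable c] (s : Finset β) (f : β → ℝ) :
    (if c then ∑ x ∈ s, f x else 0) = ∑ x ∈ s, if c then f x else 0 := by
  split_ifs <;> simp

lemma RP.mul_ite_zero (r : ℝ) (c : Prop) [Decidable c] (x : ℝ) :
    r * (if c then x else 0) = if c then r * x else 0 := by
  split_ifs <;> simp

lemma RP.sum_ite_ite {β γ : Type*} [Fintype β] [DecidableEq β] [DecidableEq γ]
    (xi : β) (q : β → γ) (yi : γ) (g : β → ℝ) :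
    ∑ x : β, (if q x = yi then (if x = xi then g x else 0) else 0)
      = if q xi = yi then g xi else 0 := by
  have key : ∀ x : β, (if q x = yi then (if x = xi then g x else 0) else 0)
      = if x = xi then (if q x = yi then g x else 0) else 0 := by
    intro x; split_ifs <;> rfl
  rw [Finset.sum_congr rfl fun x _ => key x,
    Finset.sum_ite_eq' univ xi (fun x => if q x = yi then g x else 0)]
  simp

lemma RP.sum_pi_prod {X : κ → Type} [∀ j, Fintype (X j)] (g : ∀ j, X j → ℝ) :
    ∑ y : ∀ j, X j, ∏ j, g j (y j) = ∏ j, ∑ x, g j x :=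
  (Fintype.prod_sum g).symm

lemma RP.sum_pi_fix {X : κ → Type} [∀ j, Fintype (X j)] [∀ j, DecidableEq (X j)]
    (i : κ) (xi : X i) (g : ∀ j, X j → ℝ) :
    ∑ y : ∀ j, X j, (if y i = xi then ∏ j, g j (y j) else 0)
      = g i xi * ∏ j ∈ univ.erase i, ∑ x, g j x := by
  classical
  set g' : ∀ j, X j → ℝ :=
    Function.update g i (fun x => if x = xi then g i x else 0) with hg'
  have hg'i : g' i = fun x => if x = xi then g i x else 0 := Function.update_self _ _ _
  have hg'j : ∀ j, j ≠ i → g' j = g j := fun j hj => Function.update_of_ne hj _ _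
  have key : ∀ y : ∀ j, X j,
      (if y i = xi then ∏ j, g j (y j) else 0) = ∏ j, g' j (y j) := by
    intro y
    rw [← Finset.mul_prod_erase univ (fun j => g' j (y j)) (mem_univ i)]
    have h2 : ∏ j ∈ univ.erase i, g' j (y j) = ∏ j ∈ univ.erase i, g j (y j) :=
      Finset.prod_congr rfl fun j hj => by rw [hg'j j (Finset.ne_of_mem_erase hj)]
    rw [h2, hg'i]
    dsimp only
    by_cases hc : y i = xi
    · rw [if_pos hc, if_pos hc, ← Finset.mul_prod_erase univ (fun j => g j (y j)) (mem_univ i)]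
    · rw [if_neg hc, if_neg hc, zero_mul]
  calc ∑ y : ∀ j, X j, (if y i = xi then ∏ j, g j (y j) else 0)
      = ∑ y : ∀ j, X j, ∏ j, g' j (y j) := Finset.sum_congr rfl fun y _ => key y
    _ = ∏ j, ∑ x, g' j x := RP.sum_pi_prod g'
    _ = (∑ x, g' i x) * ∏ j ∈ univ.erase i, ∑ x, g' j x :=
        (Finset.mul_prod_erase univ (fun j => ∑ x, g' j x) (mem_univ i)).symm
    _ = g i xi * ∏ j ∈ univ.erase i, ∑ x, g j x := by
        rw [hg'i]
        congr 1
        · simp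
        · exact Finset.prod_congr rfl fun j hj => by rw [hg'j j (Finset.ne_of_mem_erase hj)]

lemma RP.sum_pi_fiber {X Y : κ → Type} [∀ j, Fintype (X j)] [∀ j, Fintype (Y j)]
    [∀ j, DecidableEq (Y j)] (p : ∀ j, X j → Y j) (G : ∀ j, X j → ℝ)
    (H : (∀ j, Y j) → ℝ) :
    ∑ x : ∀ j, X j, (∏ j, G j (x j)) * H (fun j => p j (x j))
      = ∑ y : ∀ j, Y j, (∏ j, ∑ x : X j, if p j x = y j then G j x else 0) * H y := by
  classical
  have step1 : ∀ y : ∀ j, Y j,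
      (∏ j, ∑ x : X j, if p j x = y j then G j x else 0)
        = ∑ x : ∀ j, X j, ∏ j, (if p j (x j) = y j then G j (x j) else 0) := by
    intro y
    exact Fintype.prod_sum _
  simp only [step1, Finset.sum_mul]
  rw [Finset.sum_comm]
  refine Finset.sum_congr rfl fun x _ => ?_
  have step2 : ∀ y : ∀ j, Y j,
      (∏ j, (if p j (x j) = y j then G j (x j) else 0))
        = if (fun j => p j (x j)) = y then ∏ j, G j (x j) else 0 := by
    intro y
    by_cases hxy : (fun j => p j (x j)) = y
    · rw [if_pos hxy]
      exact Finset.prod_congr rfl fun j _ => by rw [if_pos (congrFun hxy j)]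
    · rw [if_neg hxy]
      obtain ⟨j, hj⟩ := Function.ne_iff.mp hxy
      exact Finset.prod_eq_zero (mem_univ j) (if_neg hj)
  simp only [step2, ite_mul, zero_mul]
  rw [Finset.sum_ite_eq univ (fun j => p j (x j)) (fun y => (∏ j, G j (x j)) * H y)]
  simp

/-- Fiber lemma with one coordinate of the domain profile fixed. -/
lemma RP.sum_pi_fix_fiber {X Y : κ → Type} [∀ j, Fintype (X j)] [∀ j, DecidableEq (X j)]
    [∀ j, Fintype (Y j)] [∀ j, DecidableEq (Y j)]
    (i : κ) (xi : X i) (p : ∀ j, X j → Y j) (G0 : ∀ j, X j → ℝ)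
    (H : (∀ j, Y j) → ℝ) :
    ∑ x : ∀ j, X j, (if x i = xi then (∏ j, G0 j (x j)) * H (fun j => p j (x j)) else 0)
      = ∑ y : ∀ j, Y j, ((if p i xi = y i then G0 i xi else 0) *
          ∏ j ∈ univ.erase i, ∑ xj : X j, if p j xj = y j then G0 j xj else 0) * H y := by
  classical
  set G : ∀ j, X j → ℝ :=
    Function.update G0 i (fun x => if x = xi then G0 i x else 0) with hG
  have hGi : G i = fun x => if x = xi then G0 i x else 0 := Function.update_self _ _ _
  have hGj : ∀ j, j ≠ i → G j = G0 j := fun j hj => Function.update_of_ne hj _ _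
  have key : ∀ x : ∀ j, X j,
      (if x i = xi then (∏ j, G0 j (x j)) * H (fun j => p j (x j)) else 0)
        = (∏ j, G j (x j)) * H (fun j => p j (x j)) := by
    intro x
    rw [← Finset.mul_prod_erase univ (fun j => G j (x j)) (mem_univ i)]
    have h2 : ∏ j ∈ univ.erase i, G j (x j) = ∏ j ∈ univ.erase i, G0 j (x j) :=
      Finset.prod_congr rfl fun j hj => by rw [hGj j (Finset.ne_of_mem_erase hj)]
    rw [h2, hGi]
    dsimp only
    by_cases hc : x i = xi
    · rw [if_pos hc, if_pos hc,
        ← Finset.mul_prod_erase univ (fun j => G0 j (x j)) (mem_univ i)]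
    · rw [if_neg hc, if_neg hc, zero_mul, zero_mul]
  rw [Finset.sum_congr rfl fun x _ => key x, RP.sum_pi_fiber p G H]
  refine Finset.sum_congr rfl fun y _ => ?_
  congr 1
  rw [← Finset.mul_prod_erase univ
    (fun j => ∑ xj : X j, if p j xj = y j then G j xj else 0) (mem_univ i)]
  congr 1
  · rw [hGi]
    dsimp only
    exact RP.sum_ite_ite xi (p i) (y i) (G0 i)
  · exact Finset.prod_congr rfl fun j hj => Finset.sum_congr rfl fun xj _ => by
      rw [hGj j (Finset.ne_of_mem_erase hj)]

lemma RP.sum_delta_update {X : κ → Type} [∀ j, Fintype (X j)] [∀ j, DecidableEq (X j)]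
    (i : κ) (θ : ∀ j, X j) (ti' : X i) (K : (∀ j, X j) → ℝ) :
    ∑ θ' : ∀ j, X j, (if θ' i = ti' then
        (∏ j ∈ univ.erase i, if θ' j = θ j then (1:ℝ) else 0) * K θ' else 0)
      = K (Function.update θ i ti') := by
  classical
  have key : ∀ θ' : ∀ j, X j,
      (if θ' i = ti' then
        (∏ j ∈ univ.erase i, if θ' j = θ j then (1:ℝ) else 0) * K θ' else 0)
      = if θ' = Function.update θ i ti' then K θ' else 0 := by
    intro θ'
    by_cases hup : θ' = Function.update θ i ti'
    · rw [if_pos hup, hup]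
      rw [if_pos (Function.update_self i ti' θ)]
      rw [Finset.prod_congr rfl fun j hj =>
        if_pos (by rw [Function.update_of_ne (Finset.ne_of_mem_erase hj)])]
      rw [Finset.prod_const_one, one_mul]
    · rw [if_neg hup]
      by_cases hi : θ' i = ti'
      · rw [if_pos hi]
        have : ∃ j, j ≠ i ∧ θ' j ≠ θ j := by
          by_contra hcon
          push_neg at hcon
          apply hup
          funext j
          by_cases hji : j = i
          · subst hji; rw [Function.update_self]; exact hi
          · rw [Function.update_of_ne hji]; exact hcon j hji
        obtain ⟨j, hji, hjθ⟩ := this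
        rw [Finset.prod_eq_zero (Finset.mem_erase.mpr ⟨hji, mem_univ j⟩)
          (if_neg hjθ : (if θ' j = θ j then (1:ℝ) else 0) = 0), zero_mul]
      · rw [if_neg hi]
  rw [Finset.sum_congr rfl fun θ' _ => key θ',
    Finset.sum_ite_eq' univ (Function.update θ i ti') K]
  simp

lemma RP.sum_delta_full {X : κ → Type} [∀ j, Fintype (X j)] [∀ j, DecidableEq (X j)]
    (θ : ∀ j, X j) (K : (∀ j, X j) → ℝ) :
    ∑ θ' : ∀ j, X j, (∏ j, if θ' j = θ j then (1:ℝ) else 0) * K θ' = K θ := by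
  classical
  have key : ∀ θ' : ∀ j, X j,
      (∏ j, if θ' j = θ j then (1:ℝ) else 0) * K θ' = if θ' = θ then K θ' else 0 := by
    intro θ'
    by_cases hh : θ' = θ
    · rw [if_pos hh, hh]
      rw [Finset.prod_congr rfl fun j _ => if_pos rfl, Finset.prod_const_one, one_mul]
    · obtain ⟨j, hj⟩ := Function.ne_iff.mp hh
      rw [Finset.prod_eq_zero (mem_univ j)
        (if_neg hj : (if θ' j = θ j then (1:ℝ) else 0) = 0), zero_mul, if_neg hh]
  rw [Finset.sum_congr rfl fun θ' _ => key θ', Finset.sum_ite_eq' univ θ K]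
  simp

lemma RP.sum_pi_pair {X Y : κ → Type} [∀ j, Fintype (X j)] [∀ j, Fintype (Y j)]
    (G : (∀ j, X j × Y j) → ℝ) :
    ∑ z : ∀ j, X j × Y j, G z
      = ∑ x : ∀ j, X j, ∑ y : ∀ j, Y j, G (fun j => (x j, y j)) := by
  classical
  let e : ((∀ j, X j) × (∀ j, Y j)) ≃ (∀ j, X j × Y j) :=
    { toFun := fun p j => (p.1 j, p.2 j)
      invFun := fun z => (fun j => (z j).1, fun j => (z j).2)
      left_inv := fun p => rfl
      right_inv := fun z => rfl }
  rw [← Equiv.sum_comp e G, Fintype.sum_prod_type]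
  rfl

end Helpers

variable {ι : Type} [Fintype ι] [DecidableEq ι]
variable {Φ Θ Ψ : ι → Type}
variable [∀ i, Fintype (Φ i)] [∀ i, DecidableEq (Φ i)]
variable [∀ i, Fintype (Θ i)] [∀ i, DecidableEq (Θ i)]
variable [∀ i, Fintype (Ψ i)] [∀ i, DecidableEq (Ψ i)]
variable {A : Type} [Fintype A]

/-- Marginal of a distribution on profiles on the `i`-th coordinate. -/
noncomputable def marg {X : ι → Type} [∀ i, Fintype (X i)] [∀ i, DecidableEq (X i)]
    (F : (∀ i, X i) → ℝ) (i : ι) (x : X i) : ℝ :=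
  ∑ y : ∀ j, X j, if y i = x then F y else 0

/-- The distribution on allocations faced by player `i` who has received message `φi`, has
type `ti`, and signals `ψi`, in the mediated mechanism `(Φ, D, Ψ, h)` with prior `F` when the
opponents play the strategy profile `τ`. -/
noncomputable def medMu (D : (∀ i, Φ i) → ℝ) (F : (∀ i, Θ i) → ℝ)
    (h : (∀ i, Φ i) → (∀ i, Ψ i) → A → ℝ) (τ : ∀ i, Φ i → Θ i → Ψ i → ℝ)
    (i : ι) (φi : Φ i) (ti : Θ i) (ψi : Ψ i) (a : A) : ℝ :=
  (∑ φ : ∀ j, Φ j, if φ i = φi then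
      D φ * ∑ θ : ∀ j, Θ j, (if θ i = ti then
        F θ * ∑ ψ : ∀ j, Ψ j, (if ψ i = ψi then
          (∏ j ∈ Finset.univ.erase i, τ j (φ j) (θ j) (ψ j)) * h φ ψ a
        else 0)
      else 0)
    else 0) / (marg D i φi * marg F i ti)

/-- `τ` is an `F`-Bayes-Nash equilibrium of the mediated mechanism `(Φ, D, Ψ, h)`. -/
def medBNE (D : (∀ i, Φ i) → ℝ) (F : (∀ i, Θ i) → ℝ)
    (h : (∀ i, Φ i) → (∀ i, Ψ i) → A → ℝ) (τ : ∀ i, Φ i → Θ i → Ψ i → ℝ)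
    (W : ∀ i, Θ i → (A → ℝ) → ℝ) : Prop :=
  ∀ (i : ι) (φi : Φ i) (ti : Θ i), 0 < marg D i φi → 0 < marg F i ti →
    ∀ ψi : Ψ i, 0 < τ i φi ti ψi → ∀ ψi' : Ψ i,
      W i ti (fun a => medMu D F h τ i φi ti ψi' a) ≤
        W i ti (fun a => medMu D F h τ i φi ti ψi a)

/-- The allocation choice function induced by the strategy profile `τ` in the mediated
mechanism `(Φ, D, Ψ, h)`. -/
noncomputable def medInduced (D : (∀ i, Φ i) → ℝ)
    (h : (∀ i, Φ i) → (∀ i, Ψ i) → A → ℝ) (τ : ∀ i, Φ i → Θ i → Ψ i → ℝ)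
    (θ : ∀ i, Θ i) (a : A) : ℝ :=
  ∑ φ : ∀ j, Φ j, D φ * ∑ ψ : ∀ j, Ψ j, (∏ i, τ i (φ i) (θ i) (ψ i)) * h φ ψ a

/-- One round of strategy sums: `∑_{s : Θ → Ψ} ∏_t k t (s t) = 1`. -/
lemma RP.sum_strat_one {β γ : Type} [Fintype β] [DecidableEq β] [Fintype γ] [DecidableEq γ] (k : β → γ → ℝ)
    (hk : ∀ t, ∑ ψ, k t ψ = 1) : ∑ s : β → γ, ∏ t, k t (s t) = 1 := by
  rw [RP.sum_pi_prod (X := fun _ : β => γ) k]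
  simp [hk]

lemma RP.margD' (D : (∀ i, Φ i) → ℝ) (τ : ∀ i, Φ i → Θ i → Ψ i → ℝ)
    (hτ1 : ∀ i φi ti, ∑ ψi, τ i φi ti ψi = 1) (i : ι) (φi : Φ i) (si : Θ i → Ψ i) :
    marg (X := fun i => Φ i × (Θ i → Ψ i))
      (fun φ' => D (fun j => (φ' j).1) * ∏ j, ∏ t : Θ j, τ j (φ' j).1 t ((φ' j).2 t))
      i (φi, si)
    = marg D i φi * ∏ t, τ i φi t (si t) := by
  classical
  unfold marg
  rw [RP.sum_pi_pair (X := Φ) (Y := fun i => Θ i → Ψ i)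
    (fun z => if z i = (φi, si) then
      D (fun j => (z j).1) * ∏ j, ∏ t : Θ j, τ j (z j).1 t ((z j).2 t) else 0)]
  have step : ∀ x : ∀ j, Φ j,
      (∑ y : ∀ j, Θ j → Ψ j, if ((fun j => (x j, y j)) : ∀ j, Φ j × (Θ j → Ψ j)) i = (φi, si)
        then D x * ∏ j, ∏ t : Θ j, τ j (x j) t (y j t) else 0)
      = if x i = φi then D x * ∏ t, τ i φi t (si t) else 0 := by
    intro x
    by_cases hx : x i = φi
    · have hcond : ∀ y : ∀ j, Θ j → Ψ j,
          (((fun j => (x j, y j)) : ∀ j, Φ j × (Θ j → Ψ j)) i = (φi, si)) ↔ (y i = si) := by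
        intro y
        simp [Prod.ext_iff, hx]
      rw [Finset.sum_congr rfl fun y _ => if_congr (hcond y) rfl rfl]
      rw [Finset.sum_congr rfl fun y _ =>
        (RP.mul_ite_zero (D x) (y i = si) (∏ j, ∏ t : Θ j, τ j (x j) t (y j t))).symm]
      rw [← Finset.mul_sum,
        RP.sum_pi_fix (X := fun j => Θ j → Ψ j) i si
          (fun j yj => ∏ t : Θ j, τ j (x j) t (yj t))]
      have herase : ∏ j ∈ univ.erase i, (∑ yj : Θ j → Ψ j, ∏ t : Θ j, τ j (x j) t (yj t))
          = 1 := by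
        refine Finset.prod_eq_one fun j _ => ?_
        exact RP.sum_strat_one (fun t ψ => τ j (x j) t ψ) (fun t => hτ1 j (x j) t)
      rw [herase, mul_one, if_pos hx, hx]
    · have hcond : ∀ y : ∀ j, Θ j → Ψ j,
          ¬(((fun j => (x j, y j)) : ∀ j, Φ j × (Θ j → Ψ j)) i = (φi, si)) := by
        intro y hy
        exact hx (congrArg Prod.fst hy)
      rw [Finset.sum_congr rfl fun y _ => if_neg (hcond y), Finset.sum_const_zero,
        if_neg hx]
  rw [Finset.sum_congr rfl fun x _ => step x, Finset.sum_mul]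
  refine Finset.sum_congr rfl fun x _ => ?_
  split_ifs <;> simp

/-- Per-coordinate strategy sum with one argument pinned. -/
lemma RP.coord_sum {β γ : Type} [Fintype β] [DecidableEq β] [Fintype γ] [DecidableEq γ]
    (k : β → γ → ℝ) (hk : ∀ t, ∑ ψ, k t ψ = 1) (t0 : β) (ψ0 : γ) :
    ∑ s : β → γ, (if s t0 = ψ0 then ∏ t, k t (s t) else 0) = k t0 ψ0 := by
  rw [RP.sum_pi_fix (X := fun _ : β => γ) t0 ψ0 k]
  rw [Finset.prod_eq_one fun t _ => hk t, mul_one]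

lemma RP.inducedEq (D : (∀ i, Φ i) → ℝ) (h : (∀ i, Φ i) → (∀ i, Ψ i) → A → ℝ)
    (τ : ∀ i, Φ i → Θ i → Ψ i → ℝ) (hτ1 : ∀ i φi ti, ∑ ψi, τ i φi ti ψi = 1)
    (θ : ∀ i, Θ i) (a : A) :
    medInduced (Φ := fun i => Φ i × (Θ i → Ψ i)) (Ψ := Θ)
      (fun φ' => D (fun i => (φ' i).1) * ∏ i, ∏ t : Θ i, τ i (φ' i).1 t ((φ' i).2 t))
      (fun φ' θ' => h (fun i => (φ' i).1) (fun i => (φ' i).2 (θ' i)))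
      (fun i _ ti ti' => if ti' = ti then (1:ℝ) else 0) θ a
    = medInduced D h τ θ a := by
  classical
  unfold medInduced
  calc ∑ z : ∀ j, Φ j × (Θ j → Ψ j),
        (D (fun j => (z j).1) * ∏ j, ∏ t : Θ j, τ j (z j).1 t ((z j).2 t)) *
          ∑ θ' : ∀ j, Θ j, (∏ j, if θ' j = θ j then (1:ℝ) else 0) *
            h (fun j => (z j).1) (fun j => (z j).2 (θ' j)) a
      = ∑ z : ∀ j, Φ j × (Θ j → Ψ j),
          (D (fun j => (z j).1) * ∏ j, ∏ t : Θ j, τ j (z j).1 t ((z j).2 t)) *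
            h (fun j => (z j).1) (fun j => (z j).2 (θ j)) a := by
        refine Finset.sum_congr rfl fun z _ => ?_
        exact congrArg _ (RP.sum_delta_full θ
          (fun θ' => h (fun j => (z j).1) (fun j => (z j).2 (θ' j)) a))
    _ = ∑ x : ∀ j, Φ j, ∑ y : ∀ j, Θ j → Ψ j,
          (D x * ∏ j, ∏ t : Θ j, τ j (x j) t (y j t)) * h x (fun j => y j (θ j)) a := by
        exact RP.sum_pi_pair (X := Φ) (Y := fun j => Θ j → Ψ j)
          (fun z => (D (fun j => (z j).1) * ∏ j, ∏ t : Θ j, τ j (z j).1 t ((z j).2 t)) *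
            h (fun j => (z j).1) (fun j => (z j).2 (θ j)) a)
    _ = ∑ x : ∀ j, Φ j, D x * ∑ ψ : ∀ j, Ψ j, (∏ j, τ j (x j) (θ j) (ψ j)) * h x ψ a := by
        refine Finset.sum_congr rfl fun x _ => ?_
        calc ∑ y : ∀ j, Θ j → Ψ j,
              (D x * ∏ j, ∏ t : Θ j, τ j (x j) t (y j t)) * h x (fun j => y j (θ j)) a
            = D x * ∑ y : ∀ j, Θ j → Ψ j,
              (∏ j, ∏ t : Θ j, τ j (x j) t (y j t)) * h x (fun j => y j (θ j)) a := by
              rw [Finset.mul_sum]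
              exact Finset.sum_congr rfl fun y _ => by ring
          _ = D x * ∑ ψ : ∀ j, Ψ j,
              (∏ j, ∑ sj : Θ j → Ψ j, if sj (θ j) = ψ j then
                ∏ t : Θ j, τ j (x j) t (sj t) else 0) * h x ψ a := by
              exact congrArg _ (RP.sum_pi_fiber (X := fun j => Θ j → Ψ j) (Y := Ψ)
                (fun j sj => sj (θ j)) (fun j sj => ∏ t : Θ j, τ j (x j) t (sj t))
                (fun ψ => h x ψ a))
          _ = D x * ∑ ψ : ∀ j, Ψ j, (∏ j, τ j (x j) (θ j) (ψ j)) * h x ψ a := by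
              refine congrArg _ (Finset.sum_congr rfl fun ψ _ => ?_)
              refine congrArg (· * h x ψ a) (Finset.prod_congr rfl fun j _ => ?_)
              exact RP.coord_sum (fun t ψ' => τ j (x j) t ψ') (fun t => hτ1 j (x j) t)
                (θ j) (ψ j)

/-- The numerator of `medMu` in the direct mechanism equals the strategy-product constant
times the numerator of `medMu` in the original mechanism at signal `si ti''`. -/
lemma RP.numEq (D : (∀ i, Φ i) → ℝ) (F : (∀ i, Θ i) → ℝ)
    (h : (∀ i, Φ i) → (∀ i, Ψ i) → A → ℝ) (τ : ∀ i, Φ i → Θ i → Ψ i → ℝ)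
    (hτ1 : ∀ i φi ti, ∑ ψi, τ i φi ti ψi = 1)
    (i : ι) (φi : Φ i) (si : Θ i → Ψ i) (ti ti'' : Θ i) (a : A) :
    (∑ z : ∀ j, Φ j × (Θ j → Ψ j), if z i = (φi, si) then
        (D (fun j => (z j).1) * ∏ j, ∏ t : Θ j, τ j (z j).1 t ((z j).2 t)) *
          ∑ θ : ∀ j, Θ j, (if θ i = ti then
            F θ * ∑ θ' : ∀ j, Θ j, (if θ' i = ti'' then
              (∏ j ∈ Finset.univ.erase i, if θ' j = θ j then (1:ℝ) else 0) *
                h (fun j => (z j).1) (fun j => (z j).2 (θ' j)) a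
            else 0)
          else 0)
      else 0)
    = (∏ t, τ i φi t (si t)) *
      (∑ φ : ∀ j, Φ j, if φ i = φi then
        D φ * ∑ θ : ∀ j, Θ j, (if θ i = ti then
          F θ * ∑ ψ : ∀ j, Ψ j, (if ψ i = si ti'' then
            (∏ j ∈ Finset.univ.erase i, τ j (φ j) (θ j) (ψ j)) * h φ ψ a
          else 0)
        else 0)
      else 0) := by
  classical
  set c : ℝ := ∏ t, τ i φi t (si t) with hc
  calc (∑ z : ∀ j, Φ j × (Θ j → Ψ j), if z i = (φi, si) then
        (D (fun j => (z j).1) * ∏ j, ∏ t : Θ j, τ j (z j).1 t ((z j).2 t)) *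
          ∑ θ : ∀ j, Θ j, (if θ i = ti then
            F θ * ∑ θ' : ∀ j, Θ j, (if θ' i = ti'' then
              (∏ j ∈ Finset.univ.erase i, if θ' j = θ j then (1:ℝ) else 0) *
                h (fun j => (z j).1) (fun j => (z j).2 (θ' j)) a
            else 0)
          else 0)
      else 0)
      = ∑ z : ∀ j, Φ j × (Θ j → Ψ j), if z i = (φi, si) then
          (D (fun j => (z j).1) * ∏ j, ∏ t : Θ j, τ j (z j).1 t ((z j).2 t)) *
            ∑ θ : ∀ j, Θ j, (if θ i = ti then
              F θ * h (fun j => (z j).1)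
                (fun j => (z j).2 (Function.update θ i ti'' j)) a
            else 0)
        else 0 := by
        refine Finset.sum_congr rfl fun z _ => ?_
        refine if_congr Iff.rfl (congrArg _ (Finset.sum_congr rfl fun θ _ => ?_)) rfl
        refine if_congr Iff.rfl (congrArg _ ?_) rfl
        exact RP.sum_delta_update i θ ti''
          (fun θ' => h (fun j => (z j).1) (fun j => (z j).2 (θ' j)) a)
    _ = ∑ x : ∀ j, Φ j, ∑ y : ∀ j, Θ j → Ψ j,
          if (x i, y i) = (φi, si) then
            (D x * ∏ j, ∏ t : Θ j, τ j (x j) t (y j t)) *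
              ∑ θ : ∀ j, Θ j, (if θ i = ti then
                F θ * h x (fun j => y j (Function.update θ i ti'' j)) a
              else 0)
          else 0 := by
        exact RP.sum_pi_pair (X := Φ) (Y := fun j => Θ j → Ψ j) _
    _ = ∑ x : ∀ j, Φ j, if x i = φi then
          c * (D x * ∑ θ : ∀ j, Θ j, (if θ i = ti then
            F θ * ∑ ψ : ∀ j, Ψ j, (if ψ i = si ti'' then
              (∏ j ∈ Finset.univ.erase i, τ j (x j) (θ j) (ψ j)) * h x ψ a
            else 0)
          else 0))
        else 0 := by
        refine Finset.sum_congr rfl fun x _ => ?_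
        by_cases hx : x i = φi
        · have hcond : ∀ y : ∀ j, Θ j → Ψ j,
              ((x i, y i) = (φi, si)) ↔ (y i = si) := by
            intro y; simp [Prod.ext_iff, hx]
          rw [if_pos hx]
          -- swap the y-sum and the θ-sum
          have swap1 : ∀ y : ∀ j, Θ j → Ψ j,
              (if (x i, y i) = (φi, si) then
                (D x * ∏ j, ∏ t : Θ j, τ j (x j) t (y j t)) *
                  ∑ θ : ∀ j, Θ j, (if θ i = ti then
                    F θ * h x (fun j => y j (Function.update θ i ti'' j)) a
                  else 0)
              else 0)
              = ∑ θ : ∀ j, Θ j, (if θ i = ti then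
                  (if y i = si then
                    D x * (F θ * ((∏ j, ∏ t : Θ j, τ j (x j) t (y j t)) *
                      h x (fun j => y j (Function.update θ i ti'' j)) a))
                  else 0)
                else 0) := by
            intro y
            rw [if_congr (hcond y) rfl rfl]
            by_cases hy : y i = si
            · rw [if_pos hy, Finset.mul_sum]
              refine Finset.sum_congr rfl fun θ _ => ?_
              rw [if_pos hy]
              split_ifs <;> ring
            · rw [if_neg hy]
              symm
              refine Finset.sum_eq_zero fun θ _ => ?_
              rw [if_neg hy]
              split_ifs <;> rfl
          rw [Finset.sum_congr rfl fun y _ => swap1 y, Finset.sum_comm]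
          -- now handle each θ
          have perθ : ∀ θ : ∀ j, Θ j,
              (∑ y : ∀ j, Θ j → Ψ j, if θ i = ti then
                (if y i = si then
                  D x * (F θ * ((∏ j, ∏ t : Θ j, τ j (x j) t (y j t)) *
                    h x (fun j => y j (Function.update θ i ti'' j)) a))
                else 0)
              else 0)
              = if θ i = ti then
                  D x * (F θ * (c * ∑ ψ : ∀ j, Ψ j, (if ψ i = si ti'' then
                    (∏ j ∈ Finset.univ.erase i, τ j (x j) (θ j) (ψ j)) * h x ψ a
                  else 0)))
                else 0 := by
            intro θ
            by_cases hθ : θ i = ti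
            · rw [if_pos hθ]
              rw [Finset.sum_congr rfl fun y _ => if_pos hθ]
              have pull : ∀ y : ∀ j, Θ j → Ψ j,
                  (if y i = si then
                    D x * (F θ * ((∏ j, ∏ t : Θ j, τ j (x j) t (y j t)) *
                      h x (fun j => y j (Function.update θ i ti'' j)) a))
                  else 0)
                  = D x * (F θ * (if y i = si then
                      (∏ j, ∏ t : Θ j, τ j (x j) t (y j t)) *
                        h x (fun j => y j (Function.update θ i ti'' j)) a
                    else 0)) := by
                intro y; split_ifs <;> simp
              rw [Finset.sum_congr rfl fun y _ => pull y, ← Finset.mul_sum, ← Finset.mul_sum]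
              congr 2
              -- the key fiber computation
              calc (∑ y : ∀ j, Θ j → Ψ j, if y i = si then
                    (∏ j, ∏ t : Θ j, τ j (x j) t (y j t)) *
                      h x (fun j => y j (Function.update θ i ti'' j)) a
                  else 0)
                  = ∑ ψ : ∀ j, Ψ j,
                      ((if si (Function.update θ i ti'' i) = ψ i then
                          ∏ t : Θ i, τ i (x i) t (si t) else 0) *
                        ∏ j ∈ univ.erase i, ∑ yj : Θ j → Ψ j,
                          if yj (Function.update θ i ti'' j) = ψ j then
                            ∏ t : Θ j, τ j (x j) t (yj t) else 0) * h x ψ a := by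
                    exact RP.sum_pi_fix_fiber (X := fun j => Θ j → Ψ j) (Y := Ψ) i si
                      (fun j yj => yj (Function.update θ i ti'' j))
                      (fun j yj => ∏ t : Θ j, τ j (x j) t (yj t))
                      (fun ψ => h x ψ a)
                _ = ∑ ψ : ∀ j, Ψ j,
                      ((if si ti'' = ψ i then c else 0) *
                        ∏ j ∈ univ.erase i, τ j (x j) (θ j) (ψ j)) * h x ψ a := by
                    refine Finset.sum_congr rfl fun ψ _ => ?_
                    congr 1
                    congr 1
                    · rw [Function.update_self]
                      rw [hc, hx]
                    · refine Finset.prod_congr rfl fun j hj => ?_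
                      rw [Function.update_of_ne (Finset.ne_of_mem_erase hj)]
                      exact RP.coord_sum (fun t ψ' => τ j (x j) t ψ')
                        (fun t => hτ1 j (x j) t) (θ j) (ψ j)
                _ = c * ∑ ψ : ∀ j, Ψ j, (if ψ i = si ti'' then
                      (∏ j ∈ Finset.univ.erase i, τ j (x j) (θ j) (ψ j)) * h x ψ a
                    else 0) := by
                    rw [Finset.mul_sum]
                    refine Finset.sum_congr rfl fun ψ _ => ?_
                    by_cases hψ : ψ i = si ti''
                    · rw [if_pos hψ, if_pos hψ.symm]; ring
                    · rw [if_neg hψ, if_neg (fun hh => hψ hh.symm)]; simp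
            · rw [if_neg hθ]
              refine Finset.sum_eq_zero fun y _ => if_neg hθ
          rw [Finset.sum_congr rfl fun θ _ => perθ θ]
          -- pull `D x` and `c` out of the θ-sum
          rw [show (∑ θ : ∀ j, Θ j, if θ i = ti then
                D x * (F θ * (c * ∑ ψ : ∀ j, Ψ j, (if ψ i = si ti'' then
                  (∏ j ∈ Finset.univ.erase i, τ j (x j) (θ j) (ψ j)) * h x ψ a
                else 0)))
              else 0)
              = c * (D x * ∑ θ : ∀ j, Θ j, (if θ i = ti then
                  F θ * ∑ ψ : ∀ j, Ψ j, (if ψ i = si ti'' then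
                    (∏ j ∈ Finset.univ.erase i, τ j (x j) (θ j) (ψ j)) * h x ψ a
                  else 0)
                else 0)) from ?_]
          rw [Finset.mul_sum, Finset.mul_sum]
          refine Finset.sum_congr rfl fun θ _ => ?_
          split_ifs <;> ring
        · rw [if_neg hx]
          refine Finset.sum_eq_zero fun y _ => ?_
          refine if_neg fun hy => hx (congrArg Prod.fst hy)
    _ = c * (∑ φ : ∀ j, Φ j, if φ i = φi then
          D φ * ∑ θ : ∀ j, Θ j, (if θ i = ti then
            F θ * ∑ ψ : ∀ j, Ψ j, (if ψ i = si ti'' then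
              (∏ j ∈ Finset.univ.erase i, τ j (φ j) (θ j) (ψ j)) * h φ ψ a
            else 0)
          else 0)
        else 0) := by
        rw [Finset.mul_sum]
        refine Finset.sum_congr rfl fun φ _ => ?_
        split_ifs <;> simp

lemma RP.marg_nonneg {X : ι → Type} [∀ i, Fintype (X i)] [∀ i, DecidableEq (X i)]
    (G : (∀ i, X i) → ℝ) (hG : ∀ x, 0 ≤ G x) (i : ι) (xi : X i) :
    0 ≤ marg G i xi := by
  unfold marg
  refine Finset.sum_nonneg fun y _ => ?_
  split_ifs with hcase
  · exact hG y
  · exact le_refl 0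

/-- Revelation principle for mediated Bayes-Nash equilibrium: if `f` is implementable in
`F`-Bayes-Nash equilibrium by the mediated mechanism `(Φ, D, Ψ, h)` with equilibrium
strategy profile `τ`, then `f` is truthfully implementable in `F`-Bayes-Nash equilibrium by
the direct mediated mechanism with message sets `Φ_i × (Ψ_i)^{Θ_i}`, mediator distribution
`D'(φ, (ψ_i^{θ_i'})) = D(φ) Π_i Π_{θ_i'} τ_i(ψ_i^{θ_i'} | φ_i, θ_i')`, and allocation
function `h^d(φ', θ') = h(φ, (ψ_i^{θ_i'(i)})_i)`. -/
theorem revelation_principle_mediated_bayes_nash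
    (D : (∀ i, Φ i) → ℝ) (hD0 : ∀ φ, 0 ≤ D φ) (hD1 : ∑ φ, D φ = 1)
    (F : (∀ i, Θ i) → ℝ) (hF0 : ∀ θ, 0 ≤ F θ) (hF1 : ∑ θ, F θ = 1)
    (h : (∀ i, Φ i) → (∀ i, Ψ i) → A → ℝ)
    (hh : ∀ φ ψ, (∀ a, 0 ≤ h φ ψ a) ∧ ∑ a, h φ ψ a = 1)
    (τ : ∀ i, Φ i → Θ i → Ψ i → ℝ)
    (hτ : ∀ i φi ti, (∀ ψi, 0 ≤ τ i φi ti ψi) ∧ ∑ ψi, τ i φi ti ψi = 1)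
    (W : ∀ i, Θ i → (A → ℝ) → ℝ)
    (hBNE : medBNE D F h τ W)
    (f : (∀ i, Θ i) → A → ℝ)
    (hf : ∀ θ, 0 < F θ → ∀ a, f θ a = medInduced D h τ θ a) :
    medBNE (Φ := fun i => Φ i × (Θ i → Ψ i)) (Ψ := Θ)
        (fun φ' => D (fun i => (φ' i).1) * ∏ i, ∏ t : Θ i, τ i (φ' i).1 t ((φ' i).2 t))
        F
        (fun φ' θ' => h (fun i => (φ' i).1) (fun i => (φ' i).2 (θ' i)))
        (fun i _ ti ti' => if ti' = ti then (1:ℝ) else 0)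
        W
      ∧ ∀ θ, 0 < F θ → ∀ a,
          f θ a = medInduced (Φ := fun i => Φ i × (Θ i → Ψ i)) (Ψ := Θ)
            (fun φ' => D (fun i => (φ' i).1) * ∏ i, ∏ t : Θ i, τ i (φ' i).1 t ((φ' i).2 t))
            (fun φ' θ' => h (fun i => (φ' i).1) (fun i => (φ' i).2 (θ' i)))
            (fun i _ ti ti' => if ti' = ti then (1:ℝ) else 0)
            θ a := by
  classical
  have hτ1 : ∀ i φi ti, ∑ ψi, τ i φi ti ψi = 1 := fun i φi ti => (hτ i φi ti).2
  constructor
  · intro i φ'i ti hD' hF ψi hψ ti'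
    obtain ⟨φi, si⟩ := φ'i
    have hψi : ψi = ti := by
      by_contra hne
      have hψ' : (0:ℝ) < if ψi = ti then 1 else 0 := hψ
      rw [if_neg hne] at hψ'
      exact lt_irrefl 0 hψ'
    rw [hψi]
    -- positivity extraction
    rw [show marg (X := fun i => Φ i × (Θ i → Ψ i))
        (fun φ' => D (fun i => (φ' i).1) * ∏ i, ∏ t : Θ i, τ i (φ' i).1 t ((φ' i).2 t))
        i (φi, si) = marg D i φi * ∏ t, τ i φi t (si t) from
      RP.margD' D τ hτ1 i φi si] at hD'
    have hmargD : 0 ≤ marg D i φi := RP.marg_nonneg D hD0 i φi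
    have hc0 : 0 ≤ ∏ t, τ i φi t (si t) :=
      Finset.prod_nonneg fun t _ => (hτ i φi t).1 (si t)
    have hDpos : 0 < marg D i φi := by
      rcases lt_or_eq_of_le hmargD with hlt | heq
      · exact hlt
      · rw [← heq, zero_mul] at hD'; exact absurd hD' (lt_irrefl 0)
    have hcpos : 0 < ∏ t, τ i φi t (si t) := by
      rcases lt_or_eq_of_le hc0 with hlt | heq
      · exact hlt
      · rw [← heq, mul_zero] at hD'; exact absurd hD' (lt_irrefl 0)
    have hτpos : ∀ t : Θ i, 0 < τ i φi t (si t) := by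
      intro t
      have hne := Finset.prod_ne_zero_iff.mp (ne_of_gt hcpos) t (mem_univ t)
      exact lt_of_le_of_ne ((hτ i φi t).1 (si t)) (Ne.symm hne)
    -- the induced allocation distributions agree
    have mueq : ∀ ti'' : Θ i, ∀ a : A,
        medMu (Φ := fun i => Φ i × (Θ i → Ψ i)) (Ψ := Θ)
          (fun φ' => D (fun i => (φ' i).1) * ∏ i, ∏ t : Θ i, τ i (φ' i).1 t ((φ' i).2 t))
          F
          (fun φ' θ' => h (fun i => (φ' i).1) (fun i => (φ' i).2 (θ' i)))
          (fun i _ ti ti' => if ti' = ti then (1:ℝ) else 0)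
          i (φi, si) ti ti'' a
        = medMu D F h τ i φi ti (si ti'') a := by
      intro ti'' a
      unfold medMu
      rw [show marg (X := fun i => Φ i × (Θ i → Ψ i))
          (fun φ' => D (fun i => (φ' i).1) * ∏ i, ∏ t : Θ i, τ i (φ' i).1 t ((φ' i).2 t))
          i (φi, si) = marg D i φi * ∏ t, τ i φi t (si t) from
        RP.margD' D τ hτ1 i φi si]
      rw [show (∑ φ : ∀ j, Φ j × (Θ j → Ψ j), if φ i = (φi, si) then
          (D (fun j => (φ j).1) * ∏ j, ∏ t : Θ j, τ j (φ j).1 t ((φ j).2 t)) *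
            ∑ θ : ∀ j, Θ j, (if θ i = ti then
              F θ * ∑ ψ : ∀ j, Θ j, (if ψ i = ti'' then
                (∏ j ∈ Finset.univ.erase i, if ψ j = θ j then (1:ℝ) else 0) *
                  h (fun j => (φ j).1) (fun j => (φ j).2 (ψ j)) a
              else 0)
            else 0)
        else 0)
        = (∏ t, τ i φi t (si t)) *
          (∑ φ : ∀ j, Φ j, if φ i = φi then
            D φ * ∑ θ : ∀ j, Θ j, (if θ i = ti then
              F θ * ∑ ψ : ∀ j, Ψ j, (if ψ i = si ti'' then
                (∏ j ∈ Finset.univ.erase i, τ j (φ j) (θ j) (ψ j)) * h φ ψ a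
              else 0)
            else 0)
          else 0) from RP.numEq D F h τ hτ1 i φi si ti ti'' a]
      rw [mul_comm (marg D i φi) (∏ t, τ i φi t (si t)), mul_assoc,
        mul_div_mul_left _ _ (ne_of_gt hcpos)]
    have e1 : (fun a => medMu (Φ := fun i => Φ i × (Θ i → Ψ i)) (Ψ := Θ)
        (fun φ' => D (fun i => (φ' i).1) * ∏ i, ∏ t : Θ i, τ i (φ' i).1 t ((φ' i).2 t))
        F (fun φ' θ' => h (fun i => (φ' i).1) (fun i => (φ' i).2 (θ' i)))
        (fun i _ ti ti' => if ti' = ti then (1:ℝ) else 0)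
        i (φi, si) ti ti' a)
        = fun a => medMu D F h τ i φi ti (si ti') a := funext fun a => mueq ti' a
    have e2 : (fun a => medMu (Φ := fun i => Φ i × (Θ i → Ψ i)) (Ψ := Θ)
        (fun φ' => D (fun i => (φ' i).1) * ∏ i, ∏ t : Θ i, τ i (φ' i).1 t ((φ' i).2 t))
        F (fun φ' θ' => h (fun i => (φ' i).1) (fun i => (φ' i).2 (θ' i)))
        (fun i _ ti ti' => if ti' = ti then (1:ℝ) else 0)
        i (φi, si) ti ti a)
        = fun a => medMu D F h τ i φi ti (si ti) a := funext fun a => mueq ti a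
    rw [e1, e2]
    exact hBNE i φi ti hDpos hF (si ti) (hτpos ti) (si ti')
  · intro θ hθ a
    rw [hf θ hθ a]
    exact (RP.inducedEq D h τ hτ1 θ a).symm
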